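/- Let (p_1, ..., p_n) be a probability vector and suppose new probabilities are formed by p'_1 = p_1 + Σ_{j∈J} α_j p_j and p'_j = (1-α_j) p_j for j in an index set J ⊆ {2,...,n} with α_j ∈ (0,1), and p'_j = p_j otherwise. If p is sorted in nonincreasing order and p'' is the nonincreasing rearrangement of p', then p'' majorizes p, and hence H(p'') ≤ H(p). -/

import Mathlib

lemma concave_nml {x y : ℝ} (hx : 0 < x) (hy : 0 ≤ y) :
    Real.negMulLog y ≤ Real.negMulLog x + (y - x) * (-Real.log x - 1) := by
  rcases hy.eq_or_lt with h | h
  · subst h; simp [Real.negMulLog]; nlinarith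
  · have h1 : Real.log (x / y) ≤ x / y - 1 := Real.log_le_sub_one_of_pos (div_pos hx h)
    rw [Real.log_div hx.ne' h.ne'] at h1
    have h2 : y * (Real.log x - Real.log y) ≤ y * (x / y - 1) :=
      mul_le_mul_of_nonneg_left h1 h.le
    have h3 : y * (x / y - 1) = x - y := by field_simp
    simp only [Real.negMulLog]
    nlinarith

lemma image_castLE {n m : ℕ} (hmn : m ≤ n) :
    Finset.univ.image (Fin.castLE hmn) = Finset.univ.filter (fun i : Fin n => (i:ℕ) < m) := by
  ext x
  simp only [Finset.mem_image, Finset.mem_filter, Finset.mem_univ, true_and]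
  constructor
  · rintro ⟨i, -, rfl⟩; exact i.2
  · intro hx; exact ⟨⟨x, hx⟩, rfl⟩

lemma card_filter_lt {n m : ℕ} (hmn : m ≤ n) :
    (Finset.univ.filter (fun i : Fin n => (i:ℕ) < m)).card = m := by
  rw [← image_castLE hmn, Finset.card_image_of_injective _ (Fin.castLE_injective hmn)]
  simp

lemma topk {n : ℕ} (f : Fin n → ℝ) (hf : Antitone f) (B : Finset (Fin n)) :
    ∑ x ∈ B, f x ≤ ∑ i ∈ Finset.univ.filter (fun i : Fin n => (i:ℕ) < B.card), f i := by
  have hmn : B.card ≤ n := by simpa using B.card_le_univ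
  set e := B.orderEmbOfFin rfl with he
  have hrange : Finset.univ.image (fun i => e i) = B := by
    ext x
    simp only [Finset.mem_image, Finset.mem_univ, true_and]
    constructor
    · rintro ⟨i, rfl⟩; exact Finset.orderEmbOfFin_mem B rfl i
    · intro hx
      have : x ∈ Set.range e := by rw [he, Finset.range_orderEmbOfFin]; exact hx
      exact this
  have hLHS : ∑ i : Fin B.card, f (e i) = ∑ x ∈ B, f x := by
    have h := Finset.sum_image (s := (Finset.univ : Finset (Fin B.card)))
      (g := fun i => e i) (f := f) (fun a _ b _ h => e.injective h)
    rw [hrange] at h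
    rw [← h]
  have hRHS : ∑ i ∈ Finset.univ.filter (fun i : Fin n => (i:ℕ) < B.card), f i
      = ∑ i : Fin B.card, f (Fin.castLE hmn i) := by
    have h := Finset.sum_image (s := (Finset.univ : Finset (Fin B.card)))
      (g := Fin.castLE hmn) (f := f) (fun a _ b _ h => (Fin.castLE_injective hmn) h)
    rw [image_castLE hmn] at h
    rw [← h]
  have hle : ∀ k (hk : k < B.card), k ≤ (e ⟨k, hk⟩ : ℕ) := by
    intro k
    induction k with
    | zero => intro hk; exact Nat.zero_le _
    | succ j ih =>
        intro hk
        have hj : j < B.card := Nat.lt_of_succ_lt hk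
        have h1 := ih hj
        have h2 : (e ⟨j, hj⟩ : ℕ) < (e ⟨j+1, hk⟩ : ℕ) := by
          have := e.strictMono (show (⟨j, hj⟩ : Fin B.card) < ⟨j+1, hk⟩ by
            simp [Fin.lt_def])
          exact this
        omega
  rw [← hLHS, hRHS]
  apply Finset.sum_le_sum
  intro i _
  apply hf
  rw [Fin.le_def]
  simpa using hle i i.2

/-- Let `p` be a probability vector sorted in nonincreasing order.
Form `p'` by moving, for each `j` in an index set `J` not containing the first index,
a fraction `α j ∈ (0,1)` of `p j` onto the first entry:
`p' 0 = p 0 + ∑_{j∈J} α j * p j`, `p' j = (1 - α j) * p j` for `j ∈ J`, and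
`p' j = p j` otherwise.  If `p''` is a nonincreasing rearrangement of `p'`, then
`p''` majorizes `p` and hence `H(p'') ≤ H(p)` (Shannon entropy `∑ negMulLog`). -/
theorem stmt6 (n : ℕ) (hn : 0 < n) (p p' p'' : Fin n → ℝ)
    (hp0 : ∀ i, 0 ≤ p i) (hp1 : ∑ i, p i = 1)
    (hpa : Antitone p)
    (J : Finset (Fin n)) (hJ : ∀ j ∈ J, j ≠ ⟨0, hn⟩)
    (α : Fin n → ℝ) (hα : ∀ j ∈ J, α j ∈ Set.Ioo (0 : ℝ) 1)
    (hp'0 : p' ⟨0, hn⟩ = p ⟨0, hn⟩ + ∑ j ∈ J, α j * p j)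
    (hp'J : ∀ j ∈ J, p' j = (1 - α j) * p j)
    (hp'other : ∀ j, j ≠ ⟨0, hn⟩ → j ∉ J → p' j = p j)
    (hperm : ∃ σ : Equiv.Perm (Fin n), ∀ i, p'' i = p' (σ i))
    (hp''a : Antitone p'') :
    (∀ k : ℕ, (∑ i ∈ Finset.univ.filter (fun i : Fin n => (i : ℕ) < k), p i) ≤
      ∑ i ∈ Finset.univ.filter (fun i : Fin n => (i : ℕ) < k), p'' i) ∧
    (∑ i, Real.negMulLog (p'' i)) ≤ ∑ i, Real.negMulLog (p i) := by
  obtain ⟨σ, hσ⟩ := hperm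
  set z : Fin n := ⟨0, hn⟩ with hz
  set S : ℝ := ∑ j ∈ J, α j * p j with hS
  have hzJ : z ∉ J := fun h => (hJ z h) rfl
  have hzle : ∀ i : Fin n, z ≤ i := by
    intro i; rw [Fin.le_def]; exact Nat.zero_le _
  have hple : ∀ i, p i ≤ p z := fun i => hpa (hzle i)
  have hSnn : 0 ≤ S := Finset.sum_nonneg fun j hj =>
    mul_nonneg (hα j hj).1.le (hp0 j)
  have hαpnn : ∀ j ∈ J, 0 ≤ α j * p j := fun j hj =>
    mul_nonneg (hα j hj).1.le (hp0 j)
  -- positivity of p z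
  have hpz : 0 < p z := by
    by_contra h
    push_neg at h
    have hpz0 : p z = 0 := le_antisymm h (hp0 z)
    have : ∑ i, p i = 0 := Finset.sum_eq_zero fun i _ =>
      le_antisymm (hpz0 ▸ hple i) (hp0 i)
    rw [hp1] at this; norm_num at this
  -- Part 1: majorization
  have hmaj : ∀ k : ℕ, (∑ i ∈ Finset.univ.filter (fun i : Fin n => (i : ℕ) < k), p i) ≤
      ∑ i ∈ Finset.univ.filter (fun i : Fin n => (i : ℕ) < k), p'' i := by
    intro k
    rcases Nat.eq_zero_or_pos k with hk0 | hkpos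
    · subst hk0; simp
    set F := Finset.univ.filter (fun i : Fin n => (i : ℕ) < k) with hF
    have hzF : z ∈ F := by
      simp only [hF, Finset.mem_filter, Finset.mem_univ, true_and]
      exact hkpos
    -- step A : ∑_F p ≤ ∑_F p'
    have stepA : ∑ i ∈ F, p i ≤ ∑ i ∈ F, p' i := by
      have hsplit : ∑ i ∈ F, (p' i - p i) = ∑ i ∈ F ∩ insert z J, (p' i - p i) := by
        refine (Finset.sum_subset (Finset.inter_subset_left) ?_).symm
        intro i hiF hiT
        have hiz : i ≠ z := by
          intro h; exact hiT (Finset.mem_inter.2 ⟨hiF, by simp [h]⟩)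
        have hiJ : i ∉ J := by
          intro h; exact hiT (Finset.mem_inter.2 ⟨hiF, Finset.mem_insert_of_mem h⟩)
        rw [hp'other i hiz hiJ]; ring
      have hFiT : F ∩ insert z J = insert z (F ∩ J) := by
        ext x
        simp only [Finset.mem_inter, Finset.mem_insert]
        constructor
        · rintro ⟨hxF, rfl | hxJ⟩
          · exact Or.inl rfl
          · exact Or.inr ⟨hxF, hxJ⟩
        · rintro (rfl | ⟨hxF, hxJ⟩)
          · exact ⟨hzF, Or.inl rfl⟩
          · exact ⟨hxF, Or.inr hxJ⟩
      have hzFJ : z ∉ F ∩ J := fun h => hzJ (Finset.mem_inter.1 h).2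
      have hval : ∑ i ∈ F, (p' i - p i)
          = S + ∑ j ∈ F ∩ J, (p' j - p j) := by
        rw [hsplit, hFiT, Finset.sum_insert hzFJ, hp'0]; ring_nf
      have hJval : ∀ j ∈ F ∩ J, p' j - p j = -(α j * p j) := by
        intro j hj
        rw [hp'J j (Finset.mem_inter.1 hj).2]; ring
      have hsub : F ∩ J ⊆ J := Finset.inter_subset_right
      have hdiff : S - ∑ j ∈ F ∩ J, α j * p j = ∑ j ∈ J \ (F ∩ J), α j * p j := by
        rw [hS, ← Finset.sum_sdiff hsub]; ring
      have : 0 ≤ ∑ i ∈ F, (p' i - p i) := by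
        rw [hval, Finset.sum_congr rfl hJval, Finset.sum_neg_distrib]
        have h1 : 0 ≤ ∑ j ∈ J \ (F ∩ J), α j * p j :=
          Finset.sum_nonneg fun j hj => hαpnn j (Finset.mem_sdiff.1 hj).1
        linarith [hdiff]
      have := this
      rw [Finset.sum_sub_distrib] at this
      linarith
    -- step B : ∑_F p' = ∑_B p'' with B of same card
    set B := F.image σ.symm with hB
    have hBcard : B.card = F.card := Finset.card_image_of_injective _ σ.symm.injective
    have stepB : ∑ i ∈ F, p' i = ∑ i ∈ B, p'' i := by
      rw [hB, Finset.sum_image (fun a _ b _ h => σ.symm.injective h)]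
      apply Finset.sum_congr rfl
      intro x _
      rw [hσ (σ.symm x), Equiv.apply_symm_apply]
    -- step C : ∑_B p'' ≤ ∑_F p''
    have hmn : min k n ≤ n := min_le_right _ _
    have hFeq : F = Finset.univ.filter (fun i : Fin n => (i:ℕ) < min k n) := by
      ext x
      simp only [hF, Finset.mem_filter, Finset.mem_univ, true_and]
      omega
    have hFcard : F.card = min k n := by rw [hFeq, card_filter_lt hmn]
    have stepC : ∑ i ∈ B, p'' i ≤ ∑ i ∈ F, p'' i := by
      have h := topk p'' hp''a B
      rwa [hBcard, hFcard, ← hFeq] at h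
    linarith
  refine ⟨hmaj, ?_⟩
  -- Part 2: entropy
  have hperm_sum : ∑ i, Real.negMulLog (p'' i) = ∑ i, Real.negMulLog (p' i) := by
    rw [show (fun i => Real.negMulLog (p'' i)) = fun i => Real.negMulLog (p' (σ i)) from
      funext fun i => by rw [hσ]]
    exact Equiv.sum_comp σ fun i => Real.negMulLog (p' i)
  rw [hperm_sum]
  set T := insert z J with hT
  have hcompl : ∀ i ∈ Finset.univ \ T, p' i = p i := by
    intro i hi
    simp only [Finset.mem_sdiff, Finset.mem_univ, true_and, hT, Finset.mem_insert,
      not_or] at hi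
    exact hp'other i hi.1 hi.2
  have hsplit : ∀ f : Fin n → ℝ, ∑ i, f i = ∑ i ∈ T, f i + ∑ i ∈ Finset.univ \ T, f i := by
    intro f
    rw [← Finset.sum_sdiff (Finset.subset_univ T), add_comm]
  rw [hsplit (fun i => Real.negMulLog (p' i)), hsplit (fun i => Real.negMulLog (p i))]
  have hcomp2 : ∑ i ∈ Finset.univ \ T, Real.negMulLog (p' i)
      = ∑ i ∈ Finset.univ \ T, Real.negMulLog (p i) :=
    Finset.sum_congr rfl fun i hi => by rw [hcompl i hi]
  rw [hcomp2]
  have hTsum : ∀ f : Fin n → ℝ, ∑ i ∈ T, f i = f z + ∑ j ∈ J, f j := fun f =>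
    Finset.sum_insert hzJ
  rw [hTsum, hTsum]
  -- key bounds
  have key0 : Real.negMulLog (p' z) ≤ Real.negMulLog (p z) + S * (-Real.log (p z) - 1) := by
    have h := concave_nml hpz (show (0:ℝ) ≤ p z + S by linarith [hp0 z])
    have e : p z + S - p z = S := by ring
    rw [e] at h
    rw [hp'0]
    exact h
  have keyJ : ∀ j ∈ J, Real.negMulLog (p' j)
      ≤ Real.negMulLog (p j) + α j * p j * (Real.log (p z) + 1) := by
    intro j hj
    obtain ⟨hα0, hα1⟩ := hα j hj
    rw [hp'J j hj]
    rcases (hp0 j).eq_or_lt with h0 | h0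
    · rw [← h0]; simp [Real.negMulLog]
    · have hcc := concave_nml h0 (show (0:ℝ) ≤ (1 - α j) * p j by nlinarith)
      have hlog : Real.log (p j) ≤ Real.log (p z) := Real.log_le_log h0 (hple j)
      have : ((1 - α j) * p j - p j) * (-Real.log (p j) - 1)
          = α j * p j * (Real.log (p j) + 1) := by ring
      rw [this] at hcc
      have : α j * p j * (Real.log (p j) + 1) ≤ α j * p j * (Real.log (p z) + 1) := by
        have : 0 < α j * p j := mul_pos hα0 h0
        nlinarith
      linarith
  have keyJsum : ∑ j ∈ J, Real.negMulLog (p' j)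
      ≤ ∑ j ∈ J, Real.negMulLog (p j) + S * (Real.log (p z) + 1) := by
    have := Finset.sum_le_sum keyJ
    rw [Finset.sum_add_distrib, ← Finset.sum_mul] at this
    linarith
  have : S * (-Real.log (p z) - 1) + S * (Real.log (p z) + 1) = 0 := by ring
  linarith
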